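/- In the universal enveloping algebra U(g_ω), the elements C := ι(P₀)² − ι(P₁)² − ι(P₂)² + ω (ι(J)² − ι(K₁)² − ι(K₂)²) and W := −ι(J)ι(P₀) + ι(K₁)ι(P₂) − ι(K₂)ι(P₁) are central: C and W commute with ι(Z) for every Z ∈ g_ω (equivalently, with each of ι(J), ι(P₀), ι(P₁), ι(P₂), ι(K₁), ι(K₂)). -/

import Mathlib

attribute [local instance 100] LieRing.ofAssociativeRing

set_option maxHeartbeats 1000000 in
/-- In the universal enveloping algebra `U(g_ω)`, the elements
`C = ι(P₀)² − ι(P₁)² − ι(P₂)² + ω(ι(J)² − ι(K₁)² − ι(K₂)²)` and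
`W = −ι(J)ι(P₀) + ι(K₁)ι(P₂) − ι(K₂)ι(P₁)` are central: they commute with `ι(Z)`
for every `Z ∈ g_ω`. -/
theorem casimirs_central_g_omega
    (ω : ℝ) (g : Type*) [LieRing g] [LieAlgebra ℝ g]
    (J P0 P1 P2 K1 K2 : g)
    (hind : LinearIndependent ℝ ![J, P0, P1, P2, K1, K2])
    (hspan : Submodule.span ℝ (Set.range ![J, P0, P1, P2, K1, K2]) = ⊤)
    (hJP1 : ⁅J, P1⁆ = P2) (hJP2 : ⁅J, P2⁆ = -P1)
    (hJK1 : ⁅J, K1⁆ = K2) (hJK2 : ⁅J, K2⁆ = -K1) (hJP0 : ⁅J, P0⁆ = 0)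
    (hP1K1 : ⁅P1, K1⁆ = -P0) (hP2K2 : ⁅P2, K2⁆ = -P0)
    (hP1K2 : ⁅P1, K2⁆ = 0) (hP2K1 : ⁅P2, K1⁆ = 0)
    (hP0K1 : ⁅P0, K1⁆ = -P1) (hP0K2 : ⁅P0, K2⁆ = -P2)
    (hK1K2 : ⁅K1, K2⁆ = -J)
    (hP0P1 : ⁅P0, P1⁆ = ω • K1) (hP0P2 : ⁅P0, P2⁆ = ω • K2)
    (hP1P2 : ⁅P1, P2⁆ = -(ω • J)) :
    let ι : g →ₗ⁅ℝ⁆ UniversalEnvelopingAlgebra ℝ g := UniversalEnvelopingAlgebra.ι ℝ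
    let C : UniversalEnvelopingAlgebra ℝ g :=
      ι P0 * ι P0 - ι P1 * ι P1 - ι P2 * ι P2
        + ω • (ι J * ι J - ι K1 * ι K1 - ι K2 * ι K2)
    let W : UniversalEnvelopingAlgebra ℝ g :=
      -(ι J * ι P0) + ι K1 * ι P2 - ι K2 * ι P1
    ∀ Z : g, C * ι Z = ι Z * C ∧ W * ι Z = ι Z * W := by
  intro ι C W
  set a := ι J with ha
  set p0 := ι P0 with hp0
  set p1 := ι P1 with hp1
  set p2 := ι P2 with hp2
  set k1 := ι K1 with hk1
  set k2 := ι K2 with hk2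
  have bm : ∀ x y : g, ⁅ι x, ι y⁆ = ι ⁅x, y⁆ := fun x y => (ι.map_lie x y).symm
  have bJP1 : ⁅a, p1⁆ = p2 := by rw [bm, hJP1]
  have bJP2 : ⁅a, p2⁆ = -p1 := by rw [bm, hJP2, map_neg]
  have bJK1 : ⁅a, k1⁆ = k2 := by rw [bm, hJK1]
  have bJK2 : ⁅a, k2⁆ = -k1 := by rw [bm, hJK2, map_neg]
  have bJP0 : ⁅a, p0⁆ = 0 := by rw [bm, hJP0, map_zero]
  have bP1K1 : ⁅p1, k1⁆ = -p0 := by rw [bm, hP1K1, map_neg]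
  have bP2K2 : ⁅p2, k2⁆ = -p0 := by rw [bm, hP2K2, map_neg]
  have bP1K2 : ⁅p1, k2⁆ = 0 := by rw [bm, hP1K2, map_zero]
  have bP2K1 : ⁅p2, k1⁆ = 0 := by rw [bm, hP2K1, map_zero]
  have bP0K1 : ⁅p0, k1⁆ = -p1 := by rw [bm, hP0K1, map_neg]
  have bP0K2 : ⁅p0, k2⁆ = -p2 := by rw [bm, hP0K2, map_neg]
  have bK1K2 : ⁅k1, k2⁆ = -a := by rw [bm, hK1K2, map_neg]
  have bP0P1 : ⁅p0, p1⁆ = ω • k1 := by rw [bm, hP0P1, map_smul]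
  have bP0P2 : ⁅p0, p2⁆ = ω • k2 := by rw [bm, hP0P2, map_smul]
  have bP1P2 : ⁅p1, p2⁆ = -(ω • a) := by rw [bm, hP1P2, map_neg, map_smul]
  have r0 : p0 * a = a * p0 - (0:UniversalEnvelopingAlgebra ℝ g) := by rw [← bJP0, Ring.lie_def]; abel
  have r0' : ∀ t : UniversalEnvelopingAlgebra ℝ g, p0 * (a * t) = (a * p0 - (0:UniversalEnvelopingAlgebra ℝ g)) * t := by
    intro t; rw [← mul_assoc, r0]
  have r1 : p1 * a = a * p1 - p2 := by rw [← bJP1, Ring.lie_def]; abel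
  have r1' : ∀ t : UniversalEnvelopingAlgebra ℝ g, p1 * (a * t) = (a * p1 - p2) * t := by
    intro t; rw [← mul_assoc, r1]
  have r2 : p2 * a = a * p2 - -p1 := by rw [← bJP2, Ring.lie_def]; abel
  have r2' : ∀ t : UniversalEnvelopingAlgebra ℝ g, p2 * (a * t) = (a * p2 - -p1) * t := by
    intro t; rw [← mul_assoc, r2]
  have r3 : k1 * a = a * k1 - k2 := by rw [← bJK1, Ring.lie_def]; abel
  have r3' : ∀ t : UniversalEnvelopingAlgebra ℝ g, k1 * (a * t) = (a * k1 - k2) * t := by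
    intro t; rw [← mul_assoc, r3]
  have r4 : k2 * a = a * k2 - -k1 := by rw [← bJK2, Ring.lie_def]; abel
  have r4' : ∀ t : UniversalEnvelopingAlgebra ℝ g, k2 * (a * t) = (a * k2 - -k1) * t := by
    intro t; rw [← mul_assoc, r4]
  have r5 : p1 * p0 = p0 * p1 - ω • k1 := by rw [← bP0P1, Ring.lie_def]; abel
  have r5' : ∀ t : UniversalEnvelopingAlgebra ℝ g, p1 * (p0 * t) = (p0 * p1 - ω • k1) * t := by
    intro t; rw [← mul_assoc, r5]
  have r6 : p2 * p0 = p0 * p2 - ω • k2 := by rw [← bP0P2, Ring.lie_def]; abel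
  have r6' : ∀ t : UniversalEnvelopingAlgebra ℝ g, p2 * (p0 * t) = (p0 * p2 - ω • k2) * t := by
    intro t; rw [← mul_assoc, r6]
  have r7 : p2 * p1 = p1 * p2 - -(ω • a) := by rw [← bP1P2, Ring.lie_def]; abel
  have r7' : ∀ t : UniversalEnvelopingAlgebra ℝ g, p2 * (p1 * t) = (p1 * p2 - -(ω • a)) * t := by
    intro t; rw [← mul_assoc, r7]
  have r8 : k1 * p0 = p0 * k1 - -p1 := by rw [← bP0K1, Ring.lie_def]; abel
  have r8' : ∀ t : UniversalEnvelopingAlgebra ℝ g, k1 * (p0 * t) = (p0 * k1 - -p1) * t := by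
    intro t; rw [← mul_assoc, r8]
  have r9 : k2 * p0 = p0 * k2 - -p2 := by rw [← bP0K2, Ring.lie_def]; abel
  have r9' : ∀ t : UniversalEnvelopingAlgebra ℝ g, k2 * (p0 * t) = (p0 * k2 - -p2) * t := by
    intro t; rw [← mul_assoc, r9]
  have r10 : k1 * p1 = p1 * k1 - -p0 := by rw [← bP1K1, Ring.lie_def]; abel
  have r10' : ∀ t : UniversalEnvelopingAlgebra ℝ g, k1 * (p1 * t) = (p1 * k1 - -p0) * t := by
    intro t; rw [← mul_assoc, r10]
  have r11 : k2 * p1 = p1 * k2 - (0:UniversalEnvelopingAlgebra ℝ g) := by rw [← bP1K2, Ring.lie_def]; abel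
  have r11' : ∀ t : UniversalEnvelopingAlgebra ℝ g, k2 * (p1 * t) = (p1 * k2 - (0:UniversalEnvelopingAlgebra ℝ g)) * t := by
    intro t; rw [← mul_assoc, r11]
  have r12 : k1 * p2 = p2 * k1 - (0:UniversalEnvelopingAlgebra ℝ g) := by rw [← bP2K1, Ring.lie_def]; abel
  have r12' : ∀ t : UniversalEnvelopingAlgebra ℝ g, k1 * (p2 * t) = (p2 * k1 - (0:UniversalEnvelopingAlgebra ℝ g)) * t := by
    intro t; rw [← mul_assoc, r12]
  have r13 : k2 * p2 = p2 * k2 - -p0 := by rw [← bP2K2, Ring.lie_def]; abel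
  have r13' : ∀ t : UniversalEnvelopingAlgebra ℝ g, k2 * (p2 * t) = (p2 * k2 - -p0) * t := by
    intro t; rw [← mul_assoc, r13]
  have r14 : k2 * k1 = k1 * k2 - -a := by rw [← bK1K2, Ring.lie_def]; abel
  have r14' : ∀ t : UniversalEnvelopingAlgebra ℝ g, k2 * (k1 * t) = (k1 * k2 - -a) * t := by
    intro t; rw [← mul_assoc, r14]
  have CJ : C * a = a * C := by
    simp only [C, W, ← ha, ← hp0, ← hp1, ← hp2, ← hk1, ← hk2, mul_add, mul_sub, add_mul, sub_mul, mul_neg, neg_mul, smul_mul_assoc,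
      mul_smul_comm, mul_assoc, mul_zero, zero_mul, smul_add, smul_sub, smul_neg, smul_smul,
      r0, r1, r2, r3, r4, r5, r6, r7, r8, r9, r10, r11, r12, r13, r14, r0', r1', r2', r3', r4', r5', r6', r7', r8', r9', r10', r11', r12', r13', r14']
    module
  have CP0 : C * p0 = p0 * C := by
    simp only [C, W, ← ha, ← hp0, ← hp1, ← hp2, ← hk1, ← hk2, mul_add, mul_sub, add_mul, sub_mul, mul_neg, neg_mul, smul_mul_assoc,
      mul_smul_comm, mul_assoc, mul_zero, zero_mul, smul_add, smul_sub, smul_neg, smul_smul,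
      r0, r1, r2, r3, r4, r5, r6, r7, r8, r9, r10, r11, r12, r13, r14, r0', r1', r2', r3', r4', r5', r6', r7', r8', r9', r10', r11', r12', r13', r14']
    module
  have CP1 : C * p1 = p1 * C := by
    simp only [C, W, ← ha, ← hp0, ← hp1, ← hp2, ← hk1, ← hk2, mul_add, mul_sub, add_mul, sub_mul, mul_neg, neg_mul, smul_mul_assoc,
      mul_smul_comm, mul_assoc, mul_zero, zero_mul, smul_add, smul_sub, smul_neg, smul_smul,
      r0, r1, r2, r3, r4, r5, r6, r7, r8, r9, r10, r11, r12, r13, r14, r0', r1', r2', r3', r4', r5', r6', r7', r8', r9', r10', r11', r12', r13', r14']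
    module
  have CP2 : C * p2 = p2 * C := by
    simp only [C, W, ← ha, ← hp0, ← hp1, ← hp2, ← hk1, ← hk2, mul_add, mul_sub, add_mul, sub_mul, mul_neg, neg_mul, smul_mul_assoc,
      mul_smul_comm, mul_assoc, mul_zero, zero_mul, smul_add, smul_sub, smul_neg, smul_smul,
      r0, r1, r2, r3, r4, r5, r6, r7, r8, r9, r10, r11, r12, r13, r14, r0', r1', r2', r3', r4', r5', r6', r7', r8', r9', r10', r11', r12', r13', r14']
    module
  have CK1 : C * k1 = k1 * C := by
    simp only [C, W, ← ha, ← hp0, ← hp1, ← hp2, ← hk1, ← hk2, mul_add, mul_sub, add_mul, sub_mul, mul_neg, neg_mul, smul_mul_assoc,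
      mul_smul_comm, mul_assoc, mul_zero, zero_mul, smul_add, smul_sub, smul_neg, smul_smul,
      r0, r1, r2, r3, r4, r5, r6, r7, r8, r9, r10, r11, r12, r13, r14, r0', r1', r2', r3', r4', r5', r6', r7', r8', r9', r10', r11', r12', r13', r14']
    module
  have CK2 : C * k2 = k2 * C := by
    simp only [C, W, ← ha, ← hp0, ← hp1, ← hp2, ← hk1, ← hk2, mul_add, mul_sub, add_mul, sub_mul, mul_neg, neg_mul, smul_mul_assoc,
      mul_smul_comm, mul_assoc, mul_zero, zero_mul, smul_add, smul_sub, smul_neg, smul_smul,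
      r0, r1, r2, r3, r4, r5, r6, r7, r8, r9, r10, r11, r12, r13, r14, r0', r1', r2', r3', r4', r5', r6', r7', r8', r9', r10', r11', r12', r13', r14']
    module
  have WJ : W * a = a * W := by
    simp only [C, W, ← ha, ← hp0, ← hp1, ← hp2, ← hk1, ← hk2, mul_add, mul_sub, add_mul, sub_mul, mul_neg, neg_mul, smul_mul_assoc,
      mul_smul_comm, mul_assoc, mul_zero, zero_mul, smul_add, smul_sub, smul_neg, smul_smul,
      r0, r1, r2, r3, r4, r5, r6, r7, r8, r9, r10, r11, r12, r13, r14, r0', r1', r2', r3', r4', r5', r6', r7', r8', r9', r10', r11', r12', r13', r14']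
    module
  have WP0 : W * p0 = p0 * W := by
    simp only [C, W, ← ha, ← hp0, ← hp1, ← hp2, ← hk1, ← hk2, mul_add, mul_sub, add_mul, sub_mul, mul_neg, neg_mul, smul_mul_assoc,
      mul_smul_comm, mul_assoc, mul_zero, zero_mul, smul_add, smul_sub, smul_neg, smul_smul,
      r0, r1, r2, r3, r4, r5, r6, r7, r8, r9, r10, r11, r12, r13, r14, r0', r1', r2', r3', r4', r5', r6', r7', r8', r9', r10', r11', r12', r13', r14']
    module
  have WP1 : W * p1 = p1 * W := by
    simp only [C, W, ← ha, ← hp0, ← hp1, ← hp2, ← hk1, ← hk2, mul_add, mul_sub, add_mul, sub_mul, mul_neg, neg_mul, smul_mul_assoc,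
      mul_smul_comm, mul_assoc, mul_zero, zero_mul, smul_add, smul_sub, smul_neg, smul_smul,
      r0, r1, r2, r3, r4, r5, r6, r7, r8, r9, r10, r11, r12, r13, r14, r0', r1', r2', r3', r4', r5', r6', r7', r8', r9', r10', r11', r12', r13', r14']
    module
  have WP2 : W * p2 = p2 * W := by
    simp only [C, W, ← ha, ← hp0, ← hp1, ← hp2, ← hk1, ← hk2, mul_add, mul_sub, add_mul, sub_mul, mul_neg, neg_mul, smul_mul_assoc,
      mul_smul_comm, mul_assoc, mul_zero, zero_mul, smul_add, smul_sub, smul_neg, smul_smul,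
      r0, r1, r2, r3, r4, r5, r6, r7, r8, r9, r10, r11, r12, r13, r14, r0', r1', r2', r3', r4', r5', r6', r7', r8', r9', r10', r11', r12', r13', r14']
    module
  have WK1 : W * k1 = k1 * W := by
    simp only [C, W, ← ha, ← hp0, ← hp1, ← hp2, ← hk1, ← hk2, mul_add, mul_sub, add_mul, sub_mul, mul_neg, neg_mul, smul_mul_assoc,
      mul_smul_comm, mul_assoc, mul_zero, zero_mul, smul_add, smul_sub, smul_neg, smul_smul,
      r0, r1, r2, r3, r4, r5, r6, r7, r8, r9, r10, r11, r12, r13, r14, r0', r1', r2', r3', r4', r5', r6', r7', r8', r9', r10', r11', r12', r13', r14']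
    module
  have WK2 : W * k2 = k2 * W := by
    simp only [C, W, ← ha, ← hp0, ← hp1, ← hp2, ← hk1, ← hk2, mul_add, mul_sub, add_mul, sub_mul, mul_neg, neg_mul, smul_mul_assoc,
      mul_smul_comm, mul_assoc, mul_zero, zero_mul, smul_add, smul_sub, smul_neg, smul_smul,
      r0, r1, r2, r3, r4, r5, r6, r7, r8, r9, r10, r11, r12, r13, r14, r0', r1', r2', r3', r4', r5', r6', r7', r8', r9', r10', r11', r12', r13', r14']
    module
  have central : ∀ X : UniversalEnvelopingAlgebra ℝ g,
      X * a = a * X → X * p0 = p0 * X → X * p1 = p1 * X → X * p2 = p2 * X →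
      X * k1 = k1 * X → X * k2 = k2 * X → ∀ Z : g, X * ι Z = ι Z * X := by
    intro X h1 h2 h3 h4 h5 h6 Z
    have hZ : Z ∈ Submodule.span ℝ (Set.range ![J, P0, P1, P2, K1, K2]) := by
      rw [hspan]; trivial
    induction hZ using Submodule.span_induction with
    | mem x hx =>
      obtain ⟨i, rfl⟩ := hx
      fin_cases i
      · exact h1
      · exact h2
      · exact h3
      · exact h4
      · exact h5
      · exact h6
    | zero => rw [map_zero, mul_zero, zero_mul]
    | add x y _ _ hx hy => rw [map_add, mul_add, add_mul, hx, hy]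
    | smul c x _ hx => rw [map_smul, mul_smul_comm, smul_mul_assoc, hx]
  intro Z
  exact ⟨central C CJ CP0 CP1 CP2 CK1 CK2 Z, central W WJ WP0 WP1 WP2 WK1 WK2 Z⟩
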